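/- Let f = Σ_{l ≥ 0} a_l X^l be a formal power series with real coefficients, let p be a natural number, and let c_m denote the m-th coefficient of the formal power series f^p. Then c_0 = a_0^p and, for every m ≥ 1, m·a_0·c_m = Σ_{l=1}^{m} (l·p − m + l)·a_l·c_{m−l}. -/

import Mathlib

set_option autoImplicit false

open Finset

private lemma miller_aux (f : PowerSeries ℝ) (p : ℕ) (hp : 1 ≤ p) (n : ℕ) :
    ∑ k ∈ range (n+1), ((k:ℝ)+1) * PowerSeries.coeff (R := ℝ) (k+1) (f^p) * PowerSeries.coeff (R := ℝ) (n-k) f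
    = (p:ℝ) * ∑ k ∈ range (n+1),
        ((k:ℝ)+1) * PowerSeries.coeff (R := ℝ) (k+1) f * PowerSeries.coeff (R := ℝ) (n-k) (f^p) := by
  have hpow : f ^ (p-1) * f = f ^ p := by
    rw [← pow_succ]; congr 1; omega
  have h : (PowerSeries.derivative ℝ) (f^p) * f
      = p • ((PowerSeries.derivative ℝ) f * f^p) := by
    rw [Derivation.leibniz_pow, smul_eq_mul, smul_mul_assoc]
    congr 1
    rw [mul_comm (f^(p-1)), mul_assoc, hpow]
  have h2 := congrArg (PowerSeries.coeff (R := ℝ) n) h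
  rw [PowerSeries.coeff_mul, Finset.Nat.sum_antidiagonal_eq_sum_range_succ_mk,
    map_nsmul, PowerSeries.coeff_mul, Finset.Nat.sum_antidiagonal_eq_sum_range_succ_mk,
    nsmul_eq_mul, Finset.mul_sum] at h2
  calc ∑ k ∈ range (n+1), ((k:ℝ)+1) * PowerSeries.coeff (R := ℝ) (k+1) (f^p)
          * PowerSeries.coeff (R := ℝ) (n-k) f
      = ∑ k ∈ range (n+1), PowerSeries.coeff (R := ℝ) k ((PowerSeries.derivative ℝ) (f^p))
          * PowerSeries.coeff (R := ℝ) (n-k) f := by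
        refine Finset.sum_congr rfl fun k _ => ?_
        rw [PowerSeries.coeff_derivative]; ring
    _ = (p:ℝ) * ∑ k ∈ range (n+1), PowerSeries.coeff (R := ℝ) k ((PowerSeries.derivative ℝ) f)
          * PowerSeries.coeff (R := ℝ) (n-k) (f^p) := by rw [h2]; push_cast; rw [Finset.mul_sum]
    _ = (p:ℝ) * ∑ k ∈ range (n+1), ((k:ℝ)+1) * PowerSeries.coeff (R := ℝ) (k+1) f
          * PowerSeries.coeff (R := ℝ) (n-k) (f^p) := by
        congr 1
        refine Finset.sum_congr rfl fun k _ => ?_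
        rw [PowerSeries.coeff_derivative]; ring

/-- The Cauchy / J.C.P. Miller recurrence for the coefficients `c_m` of the
`p`-th power of a formal power series `f = Σ a_l X^l`: `c_0 = a_0^p` and, for `m ≥ 1`,
`m a_0 c_m = Σ_{l=1}^m (l p - m + l) a_l c_{m-l}`. -/
theorem powerSeries_pow_coeff_recurrence (f : PowerSeries ℝ) (p : ℕ) :
    PowerSeries.coeff (R := ℝ) 0 (f ^ p) = (PowerSeries.coeff (R := ℝ) 0 f) ^ p ∧
    ∀ m : ℕ, 1 ≤ m →
      (m : ℝ) * PowerSeries.coeff (R := ℝ) 0 f * PowerSeries.coeff (R := ℝ) m (f ^ p)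
        = ∑ l ∈ Finset.Icc 1 m,
            ((l : ℝ) * (p : ℝ) - (m : ℝ) + (l : ℝ)) * PowerSeries.coeff (R := ℝ) l f
              * PowerSeries.coeff (R := ℝ) (m - l) (f ^ p) := by
  constructor
  · simp [PowerSeries.coeff_zero_eq_constantCoeff, map_pow]
  intro m hm
  rcases Nat.eq_zero_or_pos p with hp | hp
  · subst hp
    rw [pow_zero]
    have h1 : PowerSeries.coeff (R := ℝ) m (1 : PowerSeries ℝ) = 0 := by
      rw [PowerSeries.coeff_one]; simp [Nat.one_le_iff_ne_zero.mp hm]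
    rw [h1, mul_zero]
    symm
    refine Finset.sum_eq_zero fun l hl => ?_
    rw [Finset.mem_Icc] at hl
    rcases eq_or_ne l m with h | h
    · subst h; push_cast; ring_nf
    · have : m - l ≠ 0 := by omega
      rw [PowerSeries.coeff_one, if_neg this, mul_zero]
  · -- p ≥ 1
    obtain ⟨n, rfl⟩ : ∃ n, m = n + 1 := ⟨m - 1, by omega⟩
    have key := miller_aux f p hp n
    -- rewrite RHS as sum over range (n+1)
    rw [← Finset.Ico_add_one_right_eq_Icc, Finset.sum_Ico_eq_sum_range]
    simp only [Nat.add_sub_cancel]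
    push_cast
    have hsum : ∀ k ∈ range (n+1),
        ((1+(k:ℝ)) * p - ((n:ℝ)+1) + (1+(k:ℝ))) * PowerSeries.coeff (R := ℝ) (1+k) f
            * PowerSeries.coeff (R := ℝ) (n+1-(1+k)) (f^p)
        = ((k:ℝ)+1) * (p:ℝ) * (PowerSeries.coeff (R := ℝ) (k+1) f * PowerSeries.coeff (R := ℝ) (n-k) (f^p))
          - ((n:ℝ)-(k:ℝ)) * (PowerSeries.coeff (R := ℝ) (k+1) f * PowerSeries.coeff (R := ℝ) (n-k) (f^p)) := by
      intro k hk
      rw [Finset.mem_range] at hk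
      have e1 : n + 1 - (1+k) = n - k := by omega
      have e2 : 1 + k = k + 1 := by omega
      rw [e1, e2]; ring
    rw [Finset.sum_congr rfl hsum, Finset.sum_sub_distrib]
    -- LHS of key split
    have hrefl : ∑ k ∈ range (n+1), ((k:ℝ)+1) * PowerSeries.coeff (R := ℝ) (k+1) (f^p)
          * PowerSeries.coeff (R := ℝ) (n-k) f
        = ((n:ℝ)+1) * PowerSeries.coeff (R := ℝ) 0 f * PowerSeries.coeff (R := ℝ) (n+1) (f^p)
          + ∑ k ∈ range (n+1), ((n:ℝ)-(k:ℝ))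
              * (PowerSeries.coeff (R := ℝ) (k+1) f * PowerSeries.coeff (R := ℝ) (n-k) (f^p)) := by
      rw [Finset.sum_range_succ]
      have h3 : ∑ k ∈ range n, ((k:ℝ)+1) * PowerSeries.coeff (R := ℝ) (k+1) (f^p)
            * PowerSeries.coeff (R := ℝ) (n-k) f
          = ∑ k ∈ range n, ((n:ℝ)-(k:ℝ))
              * (PowerSeries.coeff (R := ℝ) (k+1) f * PowerSeries.coeff (R := ℝ) (n-k) (f^p)) := by
        rw [← Finset.sum_range_reflect]
        refine Finset.sum_congr rfl fun k hk => ?_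
        rw [Finset.mem_range] at hk
        have e1 : n - 1 - k + 1 = n - k := by omega
        have e2 : n - (n - 1 - k) = k + 1 := by omega
        rw [e1, e2]
        have e3 : ((n-1-k:ℕ):ℝ) = (n:ℝ)-1-(k:ℝ) := by
          rw [Nat.cast_sub (by omega), Nat.cast_sub (by omega)]; norm_num
        push_cast [e3]
        ring
      rw [h3, Finset.sum_range_succ]
      simp
      ring
    rw [hrefl] at key
    have h4 : ∑ k ∈ range (n+1), ((k:ℝ)+1) * (p:ℝ)
          * (PowerSeries.coeff (R := ℝ) (k+1) f * PowerSeries.coeff (R := ℝ) (n-k) (f^p))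
        = (p:ℝ) * ∑ k ∈ range (n+1), ((k:ℝ)+1) * PowerSeries.coeff (R := ℝ) (k+1) f
            * PowerSeries.coeff (R := ℝ) (n-k) (f^p) := by
      rw [Finset.mul_sum]; exact Finset.sum_congr rfl fun k _ => by ring
    rw [h4]
    linarith [key]
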